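/- Let d ≥ 2 be an integer, set e = d if d ≡ 0 (mod 4), e = 2d if d is odd, and e = d/2 if d ≡ 2 (mod 4), and let n ≥ 0 be an integer. Then B_d(∏_{i=n+1}^{n+d}(q^i − 1)) = 2nd + d² + 3d/2, and B_d(∏_{i=n+1}^{n+e}((−q)^i − 1)) = 2ne + e(e+1) + d/2. -/

import Mathlib

open Polynomial

/-- `φ_d(r)`: for `r = 1` it is `1/2`; for `r ≥ 2` it is the number of integers `j` with
`1 ≤ j ≤ r / d` that are coprime to `r`. -/
noncomputable def phiD (d r : ℕ) : ℚ :=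
  if r = 1 then 1 / 2
  else (((Finset.Icc 1 (r / d)).filter fun j => Nat.gcd j r = 1).card : ℚ)

/-- `B_d(f)` for `f` a rational constant times a power of `q` times a product of cyclotomic
polynomials: if `f = c·q^a·∏_{r≥1} Φ_r^{m_r}`, then `B_d(f) = 2a + Σ_r m_r·(φ(r) + d·φ_d(r))`.
The exponents are recovered as multiplicities; since `Φ_r ∣ f` forces
`φ(r) ≤ deg f` and `r ≤ 2·φ(r)²`, the sum below captures every relevant `r`. -/
noncomputable def Bd (d : ℕ) (f : Polynomial ℚ) : ℚ :=
  2 * (multiplicity X f : ℚ) +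
    ∑ r ∈ Finset.Icc 1 (2 * f.natDegree ^ 2 + 1),
      (multiplicity (cyclotomic r ℚ) f : ℚ) * ((Nat.totient r : ℚ) + d * phiD d r)

/-- `e = d` if `4 ∣ d`, `e = 2d` if `d` is odd, and `e = d/2` if `d ≡ 2 (mod 4)`. -/
def eOf (d : ℕ) : ℕ := if d % 4 = 0 then d else if d % 2 = 1 then 2 * d else d / 2


lemma prime_cyclo {r : ℕ} (hr : 1 ≤ r) : Prime (cyclotomic r ℚ) :=
  (cyclotomic.irreducible_rat hr).prime

lemma finite_self_of_prime {α : Type*} [CommMonoidWithZero α] [IsCancelMulZero α] {p : α} (hp : Prime p) :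
    FiniteMultiplicity p p := by
  refine ⟨1, fun h => hp.not_unit ?_⟩
  obtain ⟨c, hc⟩ := h
  have : p * 1 = p * (p * c) := by
    rw [mul_one]; nth_rw 1 [hc]; rw [pow_succ, pow_one, mul_assoc]
  exact IsUnit.of_mul_eq_one _ (mul_left_cancel₀ hp.ne_zero this).symm

lemma emult_cyclo_cyclo {r s : ℕ} (hr : 1 ≤ r) (hs : 1 ≤ s) :
    emultiplicity (cyclotomic r ℚ) (cyclotomic s ℚ) = if r = s then 1 else 0 := by
  split_ifs with h
  · subst h
    exact (finite_self_of_prime (prime_cyclo hr)).emultiplicity_self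
  · refine emultiplicity_eq_zero.2 fun hdvd => h ?_
    exact cyclotomic_injective (R := ℚ) <| Polynomial.eq_of_monic_of_associated
      (cyclotomic.monic r ℚ) (cyclotomic.monic s ℚ)
      (((cyclotomic.irreducible_rat hr).associated_of_dvd (cyclotomic.irreducible_rat hs)) hdvd)

lemma emult_cyclo_X_pow_sub_one {r i : ℕ} (hr : 1 ≤ r) (hi : 1 ≤ i) :
    emultiplicity (cyclotomic r ℚ) (X ^ i - 1 : Polynomial ℚ) = if r ∣ i then 1 else 0 := by
  rw [← prod_cyclotomic_eq_X_pow_sub_one hi ℚ, Finset.emultiplicity_prod (prime_cyclo hr)]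
  have : ∀ s ∈ i.divisors, emultiplicity (cyclotomic r ℚ) (cyclotomic s ℚ)
      = if r = s then 1 else 0 := fun s hs =>
    emult_cyclo_cyclo hr (Nat.pos_of_mem_divisors hs)
  rw [Finset.sum_congr rfl this, Finset.sum_ite_eq i.divisors r (fun _ => (1 : ℕ∞))]
  simp only [Nat.mem_divisors]
  by_cases h : r ∣ i <;> simp [h] <;> omega

lemma emult_cyclo_negX_pow_sub_one {r i : ℕ} (hr : 1 ≤ r) (hi : 1 ≤ i) :
    emultiplicity (cyclotomic r ℚ) ((-X) ^ i - 1 : Polynomial ℚ) =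
      if Even i then (if r ∣ i then 1 else 0)
      else (if r ∣ 2 * i ∧ ¬ r ∣ i then 1 else 0) := by
  by_cases hev : Even i
  · rw [hev.neg_pow]
    simp [hev, emult_cyclo_X_pow_sub_one hr hi]
  · have hodd : Odd i := Nat.not_even_iff_odd.1 hev
    have key1 : -((-X) ^ i - 1 : Polynomial ℚ) = X ^ i + 1 := by rw [hodd.neg_pow]; ring
    have key : (X ^ i - 1 : Polynomial ℚ) * (-((-X) ^ i - 1)) = X ^ (2 * i) - 1 := by
      rw [key1, two_mul, pow_add]; ring
    have h2 := emult_cyclo_X_pow_sub_one hr (by omega : 1 ≤ 2 * i)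
    rw [← key, emultiplicity_mul (prime_cyclo hr), emultiplicity_neg,
      emult_cyclo_X_pow_sub_one hr hi] at h2
    simp only [hev, if_false]
    rw [← emultiplicity_neg (cyclotomic r ℚ) ((-X) ^ i - 1)] at h2 ⊢
    by_cases hri : r ∣ i
    · have hr2i : r ∣ 2 * i := hri.mul_left 2
      simp only [hri, if_true, hr2i, true_and, not_true, if_false] at h2 ⊢
      have h3 : (1 : ℕ∞) + emultiplicity (cyclotomic r ℚ) (-((-X) ^ i - 1)) = 1 + 0 := by
        simpa using h2
      have h4 : emultiplicity (cyclotomic r ℚ) (-((-X) ^ i - 1)) = (0 : ℕ∞) :=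
        WithTop.add_left_cancel (x := (1 : ℕ∞)) ENat.one_ne_top h3
      simpa using h4
    · have h3 : (0 : ℕ∞) + emultiplicity (cyclotomic r ℚ) (-((-X) ^ i - 1))
          = if r ∣ 2 * i then 1 else 0 := by rw [← h2]; simp [hri]
      rw [zero_add] at h3
      simp only [hri, not_false_iff, and_true] at h3 ⊢
      exact h3



lemma sum_cnt {d m : ℕ} (hd : 2 ≤ d) (hm : 1 ≤ m) :
    ∑ r ∈ m.divisors, ((Finset.Icc 1 (r / d)).filter fun j => Nat.gcd j r = 1).card
      = m / d := by
  have hcard : (Finset.Icc 1 (m / d)).card = m / d := by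
    rw [Nat.card_Icc, Nat.add_sub_cancel]
  rw [← hcard]
  rw [Finset.card_eq_sum_card_fiberwise (f := fun j => m / Nat.gcd j m) (t := m.divisors)
    (fun j hj => by
      simp only [Finset.mem_coe, Finset.mem_Icc] at hj
      have hgpos : 0 < Nat.gcd j m := Nat.gcd_pos_of_pos_right j (by omega)
      exact Nat.mem_divisors.2 ⟨Nat.div_dvd_of_dvd (Nat.gcd_dvd_right j m), by omega⟩)]
  refine Finset.sum_congr rfl fun r hr => ?_
  obtain ⟨hrdvd, hm0⟩ := Nat.mem_divisors.1 hr
  have hrpos : 0 < r := Nat.pos_of_mem_divisors hr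
  set g := m / r with hgdef
  have hg : g * r = m := Nat.div_mul_cancel hrdvd
  have hgpos : 0 < g := Nat.pos_of_ne_zero fun h => by rw [h, zero_mul] at hg; omega
  refine Finset.card_bij' (fun k _ => g * k) (fun j _ => j / g) ?_ ?_ ?_ ?_
  · -- k in cnt-set maps into fiber
    intro k hk
    simp only [Finset.mem_filter, Finset.mem_Icc] at hk ⊢
    obtain ⟨⟨hk1, hk2⟩, hkg⟩ := hk
    have hgcd : Nat.gcd (g * k) (g * r) = g := by rw [Nat.gcd_mul_left, hkg, mul_one]
    refine ⟨⟨Nat.mul_pos hgpos hk1, ?_⟩, ?_⟩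
    · calc g * k ≤ g * (r / d) := Nat.mul_le_mul_left g hk2
        _ ≤ g * r / d := Nat.mul_div_le_mul_div_assoc g r d
        _ = m / d := by rw [hg]
    · have h2 : Nat.gcd (g * k) m = g := by rw [← hg]; exact hgcd
      rw [h2, ← hg, Nat.mul_div_cancel_left _ hgpos]
  · -- j in fiber maps into cnt-set
    intro j hj
    simp only [Finset.mem_filter, Finset.mem_Icc] at hj ⊢
    obtain ⟨⟨hj1, hj2⟩, hjf⟩ := hj
    have hgcdpos : 0 < Nat.gcd j m := Nat.gcd_pos_of_pos_right j (by omega)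
    have h1 : Nat.gcd j m * (m / Nat.gcd j m) = m := Nat.mul_div_cancel' (Nat.gcd_dvd_right j m)
    rw [hjf] at h1
    have hgcd : Nat.gcd j m = g := by
      have : Nat.gcd j m * r = g * r := by rw [h1, hg]
      exact Nat.eq_of_mul_eq_mul_right hrpos this
    have hgj : g ∣ j := hgcd ▸ Nat.gcd_dvd_left j m
    obtain ⟨k, hk⟩ := hgj
    rw [hk, Nat.mul_div_cancel_left _ hgpos]
    have hkpos : 0 < k := Nat.pos_of_ne_zero fun h => by rw [h, mul_zero] at hk; omega
    have hgcd2 : g * Nat.gcd k r = g := by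
      rw [← Nat.gcd_mul_left, ← hk, hg]
      exact hgcd
    refine ⟨⟨hkpos, ?_⟩, Nat.eq_of_mul_eq_mul_left hgpos (by omega)⟩
    · have h2 : k ≤ m / d / g := by
        have := Nat.div_le_div_right (c := g) hj2
        rwa [hk, Nat.mul_div_cancel_left _ hgpos] at this
      calc k ≤ m / d / g := h2
        _ = m / (d * g) := Nat.div_div_eq_div_mul m d g
        _ = g * r / (g * d) := by rw [hg, mul_comm d g]
        _ = r / d := Nat.mul_div_mul_left r d hgpos
  · intro k hk
    exact Nat.mul_div_cancel_left _ hgpos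
  · intro j hj
    simp only [Finset.mem_filter, Finset.mem_Icc] at hj
    obtain ⟨⟨hj1, hj2⟩, hjf⟩ := hj
    have hgcdpos : 0 < Nat.gcd j m := Nat.gcd_pos_of_pos_right j (by omega)
    have h1 : Nat.gcd j m * (m / Nat.gcd j m) = m := Nat.mul_div_cancel' (Nat.gcd_dvd_right j m)
    rw [hjf] at h1
    have hgcd : Nat.gcd j m = g := by
      have : Nat.gcd j m * r = g * r := by rw [h1, hg]
      exact Nat.eq_of_mul_eq_mul_right hrpos this
    exact Nat.mul_div_cancel' (hgcd ▸ Nat.gcd_dvd_left j m)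

lemma sum_phiD {d m : ℕ} (hd : 2 ≤ d) (hm : 1 ≤ m) :
    ∑ r ∈ m.divisors, phiD d r = ((m / d : ℕ) : ℚ) + 1 / 2 := by
  have h1 : ∀ r ∈ m.divisors, phiD d r =
      (((Finset.Icc 1 (r / d)).filter fun j => Nat.gcd j r = 1).card : ℚ)
        + (if r = 1 then 1 / 2 else 0) := by
    intro r hr
    unfold phiD
    split_ifs with h
    · subst h
      have : 1 / d = 0 := Nat.div_eq_of_lt hd
      simp [this]
    · simp
  rw [Finset.sum_congr rfl h1, Finset.sum_add_distrib, Finset.sum_ite_eq' m.divisors 1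
    (fun _ => (1 / 2 : ℚ))]
  rw [if_pos (Nat.one_mem_divisors.2 (by omega : m ≠ 0)), ← Nat.cast_sum, sum_cnt hd hm]


noncomputable def w1 (d i : ℕ) : ℚ := (i : ℚ) + d * ((i / d : ℕ) : ℚ) + (d : ℚ) / 2

noncomputable def w2 (d i : ℕ) : ℚ :=
  if Even i then ((i : ℚ) + d * ((i / d : ℕ) : ℚ) + (d : ℚ) / 2)
  else ((i : ℚ) + (d : ℚ) * ((2 * i / d : ℕ) : ℚ) - (d : ℚ) * ((i / d : ℕ) : ℚ))

-- helpers
lemma sum_range_cast (M : ℕ) : ∑ k ∈ Finset.range M, (k : ℚ) = M * ((M : ℚ) - 1) / 2 := by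
  induction M with
  | zero => simp
  | succ M ih => rw [Finset.sum_range_succ, ih]; push_cast; ring

lemma sum_indic_ge (M t : ℕ) (x : ℚ) (h : t ≤ M) :
    ∑ k ∈ Finset.range M, (if t ≤ k then x else 0) = ((M : ℚ) - t) * x := by
  induction M with
  | zero =>
    have : t = 0 := by omega
    simp [this]
  | succ M ih =>
    rcases Nat.lt_or_ge M t with h2 | h2
    · have ht : t = M + 1 := by omega
      rw [Finset.sum_eq_zero fun k hk => if_neg (by simp at hk; omega)]
      rw [ht]; push_cast; ring
    · rw [Finset.sum_range_succ, ih h2, if_pos h2]; push_cast; ring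

lemma sum_indic_eq (M t : ℕ) (x : ℚ) (h : t < M) :
    ∑ k ∈ Finset.range M, (if k = t then x else 0) = x := by
  rw [Finset.sum_ite_eq' (Finset.range M) t (fun _ => x), if_pos (Finset.mem_range.2 h)]

lemma sum_pair (g : ℕ → ℚ) (M : ℕ) :
    ∑ k ∈ Finset.range (2 * M), g k = ∑ j ∈ Finset.range M, (g (2 * j) + g (2 * j + 1)) := by
  induction M with
  | zero => simp
  | succ M ih =>
    rw [show 2 * (M + 1) = 2 * M + 1 + 1 by ring, Finset.sum_range_succ, Finset.sum_range_succ,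
      Finset.sum_range_succ, ih]
    ring

lemma window_step (g : ℕ → ℚ) (E m : ℕ) :
    ∑ k ∈ Finset.range E, g (m + 1 + k)
      = ∑ k ∈ Finset.range E, g (m + k) + g (m + E) - g m := by
  have h1 := Finset.sum_range_succ' (fun k => g (m + k)) E
  have h2 := Finset.sum_range_succ (fun k => g (m + k)) E
  simp only [Nat.add_zero] at h1
  have h3 : ∑ k ∈ Finset.range E, g (m + 1 + k) = ∑ k ∈ Finset.range E, g (m + (k + 1)) :=
    Finset.sum_congr rfl fun k _ => by rw [show m + 1 + k = m + (k + 1) by omega]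
  rw [h3]
  linarith [h1, h2]

lemma window (g : ℕ → ℚ) (E : ℕ) (C : ℚ) (hg : ∀ i, g (i + E) = g i + C) (n : ℕ) :
    ∑ k ∈ Finset.range E, g (n + 1 + k) = ∑ k ∈ Finset.range E, g (1 + k) + n * C := by
  induction n with
  | zero => simp
  | succ n ih =>
    have hstep := window_step g E (n + 1)
    rw [hg (n + 1)] at hstep
    push_cast
    calc ∑ k ∈ Finset.range E, g (n + 1 + 1 + k)
        = ∑ k ∈ Finset.range E, g (n + 1 + k) + C := by rw [hstep]; ring
      _ = ∑ k ∈ Finset.range E, g (1 + k) + ((n : ℚ) + 1) * C := by rw [ih]; ring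

lemma sum_Icc_window (g : ℕ → ℚ) (a E : ℕ) :
    ∑ i ∈ Finset.Icc (a + 1) (a + E), g i = ∑ k ∈ Finset.range E, g (a + 1 + k) := by
  rw [← Finset.Ico_add_one_right_eq_Icc, Finset.sum_Ico_eq_sum_range]
  have h : a + E + 1 - (a + 1) = E := by omega
  rw [h]

lemma shift_w1 {d : ℕ} (hd : 1 ≤ d) (i : ℕ) : w1 d (i + d) = w1 d i + 2 * d := by
  unfold w1
  rw [Nat.add_div_right i hd]
  push_cast
  ring

lemma parity_add_odd (a i : ℕ) : Even (i + (2 * a + 1)) ↔ ¬ Even i := by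
  rw [Nat.even_add]
  simp [Nat.even_iff]

lemma keyC (c i : ℕ) :
    2 * i / (4 * c + 2) = (i + (2 * c + 1)) / (4 * c + 2) + i / (4 * c + 2) := by
  have hpos : 0 < 4 * c + 2 := by omega
  obtain ⟨q, s, hs, rfl⟩ : ∃ q s, s < 4 * c + 2 ∧ i = (4 * c + 2) * q + s :=
    ⟨i / (4 * c + 2), i % (4 * c + 2), Nat.mod_lt _ hpos, (Nat.div_add_mod i _).symm⟩
  rw [show 2 * ((4 * c + 2) * q + s) = 2 * s + (4 * c + 2) * (2 * q) by ring,
    Nat.add_mul_div_left _ _ hpos,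
    show (4 * c + 2) * q + s + (2 * c + 1) = (s + (2 * c + 1)) + (4 * c + 2) * q by ring,
    Nat.add_mul_div_left _ _ hpos,
    show (4 * c + 2) * q + s = s + (4 * c + 2) * q by ring,
    Nat.add_mul_div_left _ _ hpos]
  have h : 2 * s / (4 * c + 2) = (s + (2 * c + 1)) / (4 * c + 2) := by
    rcases le_or_gt s (2 * c) with h | h
    · rw [Nat.div_eq_of_lt (by omega), Nat.div_eq_of_lt (by omega)]
    · rw [(Nat.div_eq_of_lt_le (by omega) (by omega) : 2 * s / (4 * c + 2) = 1),
        (Nat.div_eq_of_lt_le (by omega) (by omega) : (s + (2 * c + 1)) / (4 * c + 2) = 1)]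
  have h0 : s / (4 * c + 2) = 0 := Nat.div_eq_of_lt hs
  rw [h, h0]
  generalize (s + (2 * c + 1)) / (4 * c + 2) = X
  omega

lemma shift_w2_A {c : ℕ} (hc : 1 ≤ c) (i : ℕ) :
    w2 (4 * c) (i + 4 * c) = w2 (4 * c) i + 2 * (4 * c) := by
  have hpos : 0 < 4 * c := by omega
  have hpar : Even (i + 4 * c) ↔ Even i := by rw [Nat.even_add]; simp [Nat.even_iff]
  have h2 : 2 * (i + 4 * c) / (4 * c) = 2 * i / (4 * c) + 2 := by
    rw [show 2 * (i + 4 * c) = 2 * i + 4 * c + 4 * c by ring, Nat.add_div_right _ hpos,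
      Nat.add_div_right _ hpos]
  by_cases he : Even i
  · simp only [w2]
    rw [if_pos (hpar.2 he), if_pos he, Nat.add_div_right _ hpos]
    push_cast; ring
  · simp only [w2]
    rw [if_neg (fun h => he (hpar.1 h)), if_neg he, h2, Nat.add_div_right _ hpos]
    push_cast; ring

lemma shift_w2_B (m i : ℕ) :
    w2 (2 * m + 1) (i + (4 * m + 2)) = w2 (2 * m + 1) i + 2 * (4 * m + 2) := by
  have hpos : 0 < 2 * m + 1 := by omega
  have hpar : Even (i + (4 * m + 2)) ↔ Even i := by rw [Nat.even_add]; simp [Nat.even_iff]; try omega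
  have h1 : (i + (4 * m + 2)) / (2 * m + 1) = i / (2 * m + 1) + 2 := by
    rw [show i + (4 * m + 2) = i + (2 * m + 1) + (2 * m + 1) by ring, Nat.add_div_right _ hpos,
      Nat.add_div_right _ hpos]
  have h2 : 2 * (i + (4 * m + 2)) / (2 * m + 1) = 2 * i / (2 * m + 1) + 4 := by
    rw [show 2 * (i + (4 * m + 2)) = 2 * i + (2 * m + 1) + (2 * m + 1) + (2 * m + 1) + (2 * m + 1)
      by ring, Nat.add_div_right _ hpos, Nat.add_div_right _ hpos, Nat.add_div_right _ hpos,
      Nat.add_div_right _ hpos]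
  by_cases he : Even i
  · simp only [w2]
    rw [if_pos (hpar.2 he), if_pos he, h1]
    push_cast; ring
  · simp only [w2]
    rw [if_neg (fun h => he (hpar.1 h)), if_neg he, h1, h2]
    push_cast; ring

lemma shift_w2_C (c i : ℕ) :
    w2 (4 * c + 2) (i + (2 * c + 1)) = w2 (4 * c + 2) i + 2 * (2 * c + 1) := by
  have hpar := parity_add_odd c i
  have hkq : ((2 * i / (4 * c + 2) : ℕ) : ℚ)
      = ((i + (2 * c + 1)) / (4 * c + 2) : ℕ) + ((i / (4 * c + 2) : ℕ) : ℚ) := by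
    exact_mod_cast congrArg (Nat.cast : ℕ → ℚ) (keyC c i)
  by_cases he : Even i
  · simp only [w2]
    rw [if_neg (fun h => (hpar.1 h) he), if_pos he,
      show 2 * (i + (2 * c + 1)) = 2 * i + (4 * c + 2) by ring,
      Nat.add_div_right _ (by omega)]
    push_cast
    linear_combination (4 * (c : ℚ) + 2) * hkq
  · simp only [w2]
    rw [if_pos (hpar.2 he), if_neg he]
    push_cast
    linear_combination (-(4 * (c : ℚ) + 2)) * hkq

lemma base_w1 {d : ℕ} (hd : 1 ≤ d) :
    ∑ k ∈ Finset.range d, w1 d (1 + k) = (d : ℚ) ^ 2 + 3 * (d : ℚ) / 2 := by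
  have hpt : ∀ k ∈ Finset.range d, w1 d (1 + k)
      = (k : ℚ) + (1 + (d : ℚ) / 2) + (d : ℚ) * (if k = d - 1 then (1 : ℚ) else 0) := by
    intro k hk
    simp only [Finset.mem_range] at hk
    unfold w1
    have h : (1 + k) / d = if k = d - 1 then 1 else 0 := by
      split_ifs with h
      · rw [show 1 + k = d by omega, Nat.div_self (by omega)]
      · exact Nat.div_eq_of_lt (by omega)
    rw [h]
    split_ifs with h1 <;> push_cast <;> ring
  rw [Finset.sum_congr rfl hpt, Finset.sum_add_distrib, Finset.sum_add_distrib,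
    ← Finset.mul_sum, sum_indic_eq d (d - 1) 1 (by omega), sum_range_cast,
    Finset.sum_const, Finset.card_range, nsmul_eq_mul]
  push_cast
  ring

lemma base_w2_A {c : ℕ} (hc : 1 ≤ c) :
    ∑ k ∈ Finset.range (4 * c), w2 (4 * c) (1 + k)
      = (4 * (c : ℚ)) * (4 * (c : ℚ) + 1) + (4 * (c : ℚ)) / 2 := by
  rw [show 4 * c = 2 * (2 * c) by ring, sum_pair]
  have hpt : ∀ j ∈ Finset.range (2 * c),
      w2 (2 * (2 * c)) (1 + 2 * j) + w2 (2 * (2 * c)) (1 + (2 * j + 1))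
        = 4 * (j : ℚ) + (3 + (4 * (c : ℚ)) / 2)
          + (4 * (c : ℚ)) * (if c ≤ j then (1 : ℚ) else 0)
          + (4 * (c : ℚ)) * (if j = 2 * c - 1 then (1 : ℚ) else 0) := by
    intro j hj
    simp only [Finset.mem_range] at hj
    have ho : ¬ Even (1 + 2 * j) := by simp [Nat.even_iff]; try omega
    have he : Even (1 + (2 * j + 1)) := by simp [Nat.even_iff]; try omega
    simp only [w2]
    rw [if_neg ho, if_pos he]
    have e1 : (1 + 2 * j) / (2 * (2 * c)) = 0 := Nat.div_eq_of_lt (by omega)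
    have e2 : 2 * (1 + 2 * j) / (2 * (2 * c)) = if c ≤ j then 1 else 0 := by
      split_ifs with h
      · exact Nat.div_eq_of_lt_le (by omega) (by omega)
      · exact Nat.div_eq_of_lt (by omega)
    have e3 : (1 + (2 * j + 1)) / (2 * (2 * c)) = if j = 2 * c - 1 then 1 else 0 := by
      split_ifs with h
      · exact Nat.div_eq_of_lt_le (by omega) (by omega)
      · exact Nat.div_eq_of_lt (by omega)
    rw [e1, e2, e3]
    split_ifs with h1 h2 <;> push_cast <;> ring
  rw [Finset.sum_congr rfl hpt, Finset.sum_add_distrib, Finset.sum_add_distrib,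
    Finset.sum_add_distrib, ← Finset.mul_sum, ← Finset.mul_sum, ← Finset.mul_sum,
    sum_indic_ge (2 * c) c 1 (by omega), sum_indic_eq (2 * c) (2 * c - 1) 1 (by omega),
    sum_range_cast, Finset.sum_const, Finset.card_range, nsmul_eq_mul]
  push_cast
  ring

lemma base_w2_B {m : ℕ} (hm : 1 ≤ m) :
    ∑ k ∈ Finset.range (4 * m + 2), w2 (2 * m + 1) (1 + k)
      = (4 * (m : ℚ) + 2) * ((4 * (m : ℚ) + 2) + 1) + (2 * (m : ℚ) + 1) / 2 := by
  rw [show 4 * m + 2 = 2 * (2 * m + 1) by ring, sum_pair]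
  have hpt : ∀ j ∈ Finset.range (2 * m + 1),
      w2 (2 * m + 1) (1 + 2 * j) + w2 (2 * m + 1) (1 + (2 * j + 1))
        = 4 * (j : ℚ) + (3 + (2 * (m : ℚ) + 1) / 2)
          + (2 * (m : ℚ) + 1) * (if (m + 1) / 2 ≤ j then (1 : ℚ) else 0)
          + (2 * (m : ℚ) + 1) * (if (3 * m + 2) / 2 ≤ j then (1 : ℚ) else 0)
          + (2 * (m : ℚ) + 1) * (if m ≤ j then (1 : ℚ) else 0)
          + (2 * (m : ℚ) + 1) * (if j = 2 * m then (1 : ℚ) else 0) := by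
    intro j hj
    simp only [Finset.mem_range] at hj
    have ho : ¬ Even (1 + 2 * j) := by simp [Nat.even_iff]; try omega
    have he : Even (1 + (2 * j + 1)) := by simp [Nat.even_iff]; try omega
    simp only [w2]
    rw [if_neg ho, if_pos he]
    have e1 : (1 + 2 * j) / (2 * m + 1) = if m ≤ j then 1 else 0 := by
      split_ifs with h
      · exact Nat.div_eq_of_lt_le (by omega) (by omega)
      · exact Nat.div_eq_of_lt (by omega)
    have e2 : 2 * (1 + 2 * j) / (2 * m + 1)
        = (if (m + 1) / 2 ≤ j then 1 else 0) + (if m ≤ j then 1 else 0)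
          + (if (3 * m + 2) / 2 ≤ j then 1 else 0) := by
      split_ifs with a b cc <;>
        first
          | omega
          | exact Nat.div_eq_of_lt_le (by omega) (by omega)
          | exact Nat.div_eq_of_lt (by omega)
    have e3 : (1 + (2 * j + 1)) / (2 * m + 1)
        = (if m ≤ j then 1 else 0) + (if j = 2 * m then 1 else 0) := by
      split_ifs with a b <;>
        first
          | omega
          | exact Nat.div_eq_of_lt_le (by omega) (by omega)
          | exact Nat.div_eq_of_lt (by omega)
    rw [e1, e2, e3]
    split_ifs <;> push_cast <;> ring
  rw [Finset.sum_congr rfl hpt, Finset.sum_add_distrib, Finset.sum_add_distrib,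
    Finset.sum_add_distrib, Finset.sum_add_distrib, Finset.sum_add_distrib,
    ← Finset.mul_sum, ← Finset.mul_sum, ← Finset.mul_sum, ← Finset.mul_sum, ← Finset.mul_sum,
    sum_indic_ge (2 * m + 1) ((m + 1) / 2) 1 (by omega),
    sum_indic_ge (2 * m + 1) ((3 * m + 2) / 2) 1 (by omega),
    sum_indic_ge (2 * m + 1) m 1 (by omega),
    sum_indic_eq (2 * m + 1) (2 * m) 1 (by omega),
    sum_range_cast, Finset.sum_const, Finset.card_range, nsmul_eq_mul]
  have hq : (((m + 1) / 2 : ℕ) : ℚ) + (((3 * m + 2) / 2 : ℕ) : ℚ) = 2 * (m : ℚ) + 1 := by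
    have h : (m + 1) / 2 + (3 * m + 2) / 2 = 2 * m + 1 := by omega
    exact_mod_cast congrArg (Nat.cast : ℕ → ℚ) h
  push_cast
  linear_combination (-(2 * (m : ℚ) + 1)) * hq

lemma base_w2_C (c : ℕ) :
    ∑ k ∈ Finset.range (2 * c + 1), w2 (4 * c + 2) (1 + k)
      = (2 * (c : ℚ) + 1) * ((2 * (c : ℚ) + 1) + 1) + (4 * (c : ℚ) + 2) / 2 := by
  rcases Nat.eq_zero_or_pos c with rfl | hc
  · norm_num [w2, Nat.even_iff]
  · rw [Finset.sum_range_succ' (fun k => w2 (4 * c + 2) (1 + k)) (2 * c)]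
    rw [show 2 * c = 2 * c from rfl, sum_pair (fun k => w2 (4 * c + 2) (1 + (k + 1))) c]
    have hg0 : w2 (4 * c + 2) (1 + 0) = 1 := by
      have h1 : 2 * (1 + 0) / (4 * c + 2) = 0 := Nat.div_eq_of_lt (by omega)
      have h2 : (1 + 0) / (4 * c + 2) = 0 := Nat.div_eq_of_lt (by omega)
      simp only [w2]
      rw [if_neg (by simp [Nat.even_iff]), h1, h2]
      push_cast; ring
    have hpt : ∀ j ∈ Finset.range c,
        w2 (4 * c + 2) (1 + (2 * j + 1)) + w2 (4 * c + 2) (1 + (2 * j + 1 + 1))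
          = 4 * (j : ℚ) + (5 + (4 * (c : ℚ) + 2) / 2)
            + (4 * (c : ℚ) + 2) * (if j = c - 1 then (1 : ℚ) else 0) := by
      intro j hj
      simp only [Finset.mem_range] at hj
      have he : Even (1 + (2 * j + 1)) := by simp [Nat.even_iff]; try omega
      have ho : ¬ Even (1 + (2 * j + 1 + 1)) := by simp [Nat.even_iff]; try omega
      simp only [w2]
      rw [if_pos he, if_neg ho]
      have e1 : (1 + (2 * j + 1)) / (4 * c + 2) = 0 := Nat.div_eq_of_lt (by omega)
      have e2 : (1 + (2 * j + 1 + 1)) / (4 * c + 2) = 0 := Nat.div_eq_of_lt (by omega)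
      have e3 : 2 * (1 + (2 * j + 1 + 1)) / (4 * c + 2) = if j = c - 1 then 1 else 0 := by
        split_ifs with h
        · exact Nat.div_eq_of_lt_le (by omega) (by omega)
        · exact Nat.div_eq_of_lt (by omega)
      rw [e1, e2, e3]
      split_ifs <;> push_cast <;> ring
    rw [Finset.sum_congr rfl hpt, Finset.sum_add_distrib, Finset.sum_add_distrib,
      ← Finset.mul_sum, ← Finset.mul_sum,
      sum_indic_eq c (c - 1) 1 (by omega), sum_range_cast, Finset.sum_const,
      Finset.card_range, nsmul_eq_mul, hg0]
    push_cast
    ring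




noncomputable def vq (d r : ℕ) : ℚ := (Nat.totient r : ℚ) + d * phiD d r

lemma sum_vq {d m : ℕ} (hd : 2 ≤ d) (hm : 1 ≤ m) :
    ∑ r ∈ m.divisors, vq d r = (m : ℚ) + d * ((m / d : ℕ) : ℚ) + (d : ℚ) / 2 := by
  unfold vq
  rw [Finset.sum_add_distrib, ← Finset.mul_sum, sum_phiD hd hm]
  have ht : ∑ r ∈ m.divisors, ((Nat.totient r : ℚ)) = (m : ℚ) := by
    exact_mod_cast congrArg (Nat.cast : ℕ → ℚ) (Nat.sum_totient m)
  rw [ht]; ring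

lemma filter_dvd_eq_divisors {i N : ℕ} (h1 : 1 ≤ i) (h2 : i ≤ N) :
    (Finset.Icc 1 N).filter (· ∣ i) = i.divisors := by
  ext a
  simp only [Finset.mem_filter, Finset.mem_Icc, Nat.mem_divisors]
  constructor
  · rintro ⟨_, ha⟩; exact ⟨ha, by omega⟩
  · rintro ⟨ha, -⟩
    exact ⟨⟨Nat.pos_of_dvd_of_pos ha h1, (Nat.le_of_dvd h1 ha).trans h2⟩, ha⟩

-- generic: Bd of a product of factors g i, i ∈ Icc (n+1) (n+E), where each factor has
-- natDegree i, nonzero eval at 0, and emultiplicity given by em i r.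
lemma Bd_prod_eq {d n E : ℕ} (hd : 2 ≤ d) (hE : 1 ≤ E) (g : ℕ → Polynomial ℚ)
    (hdeg : ∀ i, 1 ≤ i → (g i).natDegree = i)
    (hev : ∀ i, 1 ≤ i → (g i).eval 0 ≠ 0)
    (em : ℕ → ℕ → ℕ)
    (hem : ∀ r i, 1 ≤ r → 1 ≤ i →
      emultiplicity (cyclotomic r ℚ) (g i) = (em r i : ℕ∞))
    (hem0 : ∀ r i, n + 1 ≤ i → i ≤ n + E → 2 * (n + E) + 1 < r → em r i = 0) :
    Bd d (∏ i ∈ Finset.Icc (n + 1) (n + E), g i)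
      = ∑ i ∈ Finset.Icc (n + 1) (n + E), ∑ r ∈ Finset.Icc 1 (2 * (n + E) + 1),
          (em r i : ℚ) * vq d r := by
  set f := ∏ i ∈ Finset.Icc (n + 1) (n + E), g i with hf
  have hg0 : ∀ i ∈ Finset.Icc (n + 1) (n + E), g i ≠ 0 := by
    intro i hi
    simp only [Finset.mem_Icc] at hi
    intro h
    exact hev i (by omega) (by rw [h]; simp)
  have hdegf : f.natDegree = ∑ i ∈ Finset.Icc (n + 1) (n + E), i := by
    rw [hf, Polynomial.natDegree_prod _ _ hg0]
    exact Finset.sum_congr rfl fun i hi => hdeg i (by simp only [Finset.mem_Icc] at hi; omega)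
  have hNE : n + E ≤ f.natDegree := by
    rw [hdegf]
    exact Finset.single_le_sum (fun i _ => Nat.zero_le i)
      (Finset.mem_Icc.2 ⟨by omega, le_refl _⟩)
  have hN : 2 * (n + E) + 1 ≤ 2 * f.natDegree ^ 2 + 1 := by nlinarith
  have hX : multiplicity X f = 0 := by
    rw [multiplicity_eq_zero]
    rw [Polynomial.X_dvd_iff, Polynomial.coeff_zero_eq_eval_zero, hf, Polynomial.eval_prod]
    refine Finset.prod_ne_zero_iff.2 fun i hi => ?_
    intro h2
    apply absurd h2
    simp only [Finset.mem_Icc] at hi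
    exact hev i (by omega)
  have hmul : ∀ r, 1 ≤ r → multiplicity (cyclotomic r ℚ) f
      = ∑ i ∈ Finset.Icc (n + 1) (n + E), em r i := by
    intro r hr
    apply multiplicity_eq_of_emultiplicity_eq_some
    rw [hf, Finset.emultiplicity_prod (prime_cyclo hr), Nat.cast_sum]
    exact Finset.sum_congr rfl fun i hi =>
      hem r i hr (by simp only [Finset.mem_Icc] at hi; omega)
  unfold Bd
  rw [hX]
  push_cast
  rw [mul_zero, zero_add]
  have hsub : Finset.Icc 1 (2 * (n + E) + 1) ⊆ Finset.Icc 1 (2 * f.natDegree ^ 2 + 1) := by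
    apply Finset.Icc_subset_Icc_right hN
  rw [← Finset.sum_subset hsub ?vanish]
  case vanish =>
    intro r hr1 hr2
    simp only [Finset.mem_Icc] at hr1 hr2
    have hr : 1 ≤ r := hr1.1
    have hrbig : 2 * (n + E) + 1 < r := by omega
    rw [hmul r hr]
    have : ∑ i ∈ Finset.Icc (n + 1) (n + E), em r i = 0 := by
      apply Finset.sum_eq_zero
      intro i hi
      simp only [Finset.mem_Icc] at hi
      exact hem0 r i hi.1 hi.2 hrbig
    rw [this]
    simp
  have hcongr : ∀ r ∈ Finset.Icc 1 (2 * (n + E) + 1),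
      (multiplicity (cyclotomic r ℚ) f : ℚ) * ((Nat.totient r : ℚ) + d * phiD d r)
        = ∑ i ∈ Finset.Icc (n + 1) (n + E), (em r i : ℚ) * vq d r := by
    intro r hr
    simp only [Finset.mem_Icc] at hr
    rw [hmul r hr.1]
    push_cast
    rw [Finset.sum_mul]
    rfl
  rw [Finset.sum_congr rfl hcongr, Finset.sum_comm]

lemma Bd_eq_sum1 {d n E : ℕ} (hd : 2 ≤ d) (hE : 1 ≤ E) :
    Bd d (∏ i ∈ Finset.Icc (n + 1) (n + E), (X ^ i - 1 : Polynomial ℚ))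
      = ∑ i ∈ Finset.Icc (n + 1) (n + E), w1 d i := by
  simp only [w1]
  rw [Bd_prod_eq hd hE _
    (fun i _ => by rw [← C_1, natDegree_X_pow_sub_C])
    (fun i hi => by simp [zero_pow (by omega : i ≠ 0)])
    (fun r i => if r ∣ i then 1 else 0)
    (fun r i hr hi => by rw [emult_cyclo_X_pow_sub_one hr hi]; split_ifs <;> simp_all)
    (fun r i hi1 hi2 hr => if_neg fun hdvd =>
      absurd (Nat.le_of_dvd (by omega) hdvd) (by omega))]
  refine Finset.sum_congr rfl fun i hi => ?_
  simp only [Finset.mem_Icc] at hi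
  have h1 : 1 ≤ i := by omega
  have h2 : i ≤ 2 * (n + E) + 1 := by omega
  have hc : ∀ r ∈ Finset.Icc 1 (2 * (n + E) + 1),
      ((if r ∣ i then 1 else 0 : ℕ) : ℚ) * vq d r
        = if r ∣ i then vq d r else 0 := by
    intro r _
    split_ifs <;> simp
  rw [Finset.sum_congr rfl hc, ← Finset.sum_filter, filter_dvd_eq_divisors h1 h2, sum_vq hd h1]

lemma filter_dvd2_eq {i N : ℕ} (h1 : 1 ≤ i) (h2 : 2 * i ≤ N) :
    (Finset.Icc 1 N).filter (fun r => r ∣ 2 * i ∧ ¬ r ∣ i) = (2 * i).divisors \ i.divisors := by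
  ext a
  simp only [Finset.mem_filter, Finset.mem_Icc, Finset.mem_sdiff, Nat.mem_divisors]
  constructor
  · rintro ⟨-, ha, hna⟩
    exact ⟨⟨ha, by omega⟩, fun h => hna h.1⟩
  · rintro ⟨⟨ha, -⟩, hna⟩
    refine ⟨⟨Nat.pos_of_dvd_of_pos ha (by omega), (Nat.le_of_dvd (by omega) ha).trans h2⟩, ha,
      fun h => hna ⟨h, by omega⟩⟩

lemma Bd_eq_sum2 {d n E : ℕ} (hd : 2 ≤ d) (hE : 1 ≤ E) :
    Bd d (∏ i ∈ Finset.Icc (n + 1) (n + E), ((-X : Polynomial ℚ) ^ i - 1))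
      = ∑ i ∈ Finset.Icc (n + 1) (n + E), w2 d i := by
  rw [Bd_prod_eq hd hE _
    (fun i hi => by
      rcases Nat.even_or_odd i with he | ho
      · rw [he.neg_pow, ← C_1, natDegree_X_pow_sub_C]
      · have h : ((-X : Polynomial ℚ) ^ i - 1) = -(X ^ i + 1) := by rw [ho.neg_pow]; ring
        rw [h, natDegree_neg, ← C_1, natDegree_X_pow_add_C])
    (fun i hi => by simp [zero_pow (by omega : i ≠ 0)])
    (fun r i => if Even i then (if r ∣ i then 1 else 0) else (if r ∣ 2 * i ∧ ¬ r ∣ i then 1 else 0))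
    (fun r i hr hi => by
      rw [emult_cyclo_negX_pow_sub_one hr hi]
      by_cases he : Even i <;> by_cases h1 : r ∣ i <;>
        by_cases h2 : r ∣ 2 * i ∧ ¬ r ∣ i <;> simp [he, h1, h2])
    (fun r i hi1 hi2 hr => by
      split_ifs with h1 h2 h3
      · exact absurd (Nat.le_of_dvd (by omega) h2) (by omega)
      · rfl
      · exact absurd (Nat.le_of_dvd (by omega) h3.1) (by omega)
      · rfl)]
  refine Finset.sum_congr rfl fun i hi => ?_
  simp only [Finset.mem_Icc] at hi
  have h1 : 1 ≤ i := by omega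
  have h2 : i ≤ 2 * (n + E) + 1 := by omega
  have h2' : 2 * i ≤ 2 * (n + E) + 1 := by omega
  by_cases hevi : Even i
  · have hc : ∀ r ∈ Finset.Icc 1 (2 * (n + E) + 1),
        ((if Even i then (if r ∣ i then 1 else 0) else (if r ∣ 2*i ∧ ¬ r ∣ i then 1 else 0) : ℕ) : ℚ)
          * vq d r = if r ∣ i then vq d r else 0 := by
      intro r _
      simp only [hevi, if_true]
      split_ifs <;> simp
    rw [Finset.sum_congr rfl hc, ← Finset.sum_filter, filter_dvd_eq_divisors h1 h2, sum_vq hd h1,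
      w2, if_pos hevi]
  · have hc : ∀ r ∈ Finset.Icc 1 (2 * (n + E) + 1),
        ((if Even i then (if r ∣ i then 1 else 0) else (if r ∣ 2*i ∧ ¬ r ∣ i then 1 else 0) : ℕ) : ℚ)
          * vq d r = if r ∣ 2 * i ∧ ¬ r ∣ i then vq d r else 0 := by
      intro r _
      simp only [hevi, if_false]
      split_ifs <;> simp
    rw [Finset.sum_congr rfl hc, ← Finset.sum_filter, filter_dvd2_eq h1 h2',
      Finset.sum_sdiff_eq_sub (Nat.divisors_subset_of_dvd (by omega) (dvd_mul_left i 2)),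
      sum_vq hd (by omega : 1 ≤ 2 * i), sum_vq hd h1, w2, if_neg hevi]
    push_cast
    ring


theorem Bd_prod_consecutive (d n : ℕ) (hd : 2 ≤ d) :
    Bd d (∏ i ∈ Finset.Icc (n + 1) (n + d), (X ^ i - 1))
      = 2 * (n : ℚ) * d + (d : ℚ) ^ 2 + 3 * (d : ℚ) / 2 ∧
    Bd d (∏ i ∈ Finset.Icc (n + 1) (n + eOf d), ((-X : Polynomial ℚ) ^ i - 1))
      = 2 * (n : ℚ) * (eOf d) + (eOf d : ℚ) * ((eOf d : ℚ) + 1) + (d : ℚ) / 2 := by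
  constructor
  · rw [Bd_eq_sum1 hd (by omega : (1 : ℕ) ≤ d), sum_Icc_window (w1 d) n d,
      window (w1 d) d _ (shift_w1 (by omega)) n, base_w1 (by omega)]
    push_cast
    ring
  · by_cases h0 : d % 4 = 0
    · obtain ⟨c, rfl⟩ : ∃ c, d = 4 * c := ⟨d / 4, by omega⟩
      have hc : 1 ≤ c := by omega
      have heq : eOf (4 * c) = 4 * c := by unfold eOf; rw [if_pos h0]
      rw [heq, Bd_eq_sum2 hd (by omega : (1 : ℕ) ≤ 4 * c), sum_Icc_window (w2 (4 * c)) n (4 * c),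
        window (w2 (4 * c)) (4 * c) _ (shift_w2_A hc) n, base_w2_A hc]
      push_cast
      ring
    · by_cases h1 : d % 2 = 1
      · obtain ⟨m, rfl⟩ : ∃ m, d = 2 * m + 1 := ⟨d / 2, by omega⟩
        have hm : 1 ≤ m := by omega
        have heq : eOf (2 * m + 1) = 4 * m + 2 := by
          unfold eOf; rw [if_neg h0, if_pos h1]; omega
        rw [heq, Bd_eq_sum2 hd (by omega : (1 : ℕ) ≤ 4 * m + 2),
          sum_Icc_window (w2 (2 * m + 1)) n (4 * m + 2),
          window (w2 (2 * m + 1)) (4 * m + 2) _ (shift_w2_B m) n, base_w2_B hm]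
        push_cast
        ring
      · obtain ⟨c, rfl⟩ : ∃ c, d = 4 * c + 2 := ⟨d / 4, by omega⟩
        have heq : eOf (4 * c + 2) = 2 * c + 1 := by
          unfold eOf; rw [if_neg h0, if_neg h1]; omega
        rw [heq, Bd_eq_sum2 hd (by omega : (1 : ℕ) ≤ 2 * c + 1),
          sum_Icc_window (w2 (4 * c + 2)) n (2 * c + 1),
          window (w2 (4 * c + 2)) (2 * c + 1) _ (shift_w2_C c) n, base_w2_C c]
        push_cast
        ring
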